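/- Fix r > 0 and β ∈ (0,1), and define a_n := Γ(rn+1)/(n! · Γ(rnβ+1)) for n ∈ ℕ, where Γ is the Gamma function. Then, as n → ∞: (i) if r < 1/(1−β), then a_{n+1}/a_n → 0; (ii) if r > 1/(1−β), then a_{n+1}/a_n → ∞; (iii) if r = 1/(1−β) (so r > 1), then a_{n+1}/a_n → r^r/(r−1)^{r−1}. -/

import Mathlib

open Filter Topology Real Set

section GammaRatioAux

lemma wendel_up {a x : ℝ} (ha0 : 0 ≤ a) (ha1 : a ≤ 1) (hx : 0 < x) :
    Real.Gamma (x + a) ≤ Real.Gamma x * x ^ a := by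
  have h := Real.convexOn_log_Gamma.2 (mem_Ioi.mpr hx)
    (mem_Ioi.mpr (by linarith : (0:ℝ) < x + 1)) (by linarith : (0:ℝ) ≤ 1 - a) ha0 (by ring)
  have harg : (1 - a) • x + a • (x + 1) = x + a := by simp [smul_eq_mul]; ring
  rw [harg] at h
  simp only [Function.comp_apply, smul_eq_mul] at h
  have hΓx : 0 < Real.Gamma x := Real.Gamma_pos_of_pos hx
  have hΓxa : 0 < Real.Gamma (x + a) := Real.Gamma_pos_of_pos (by linarith)
  have h1 : Real.Gamma (x + 1) = x * Real.Gamma x := Real.Gamma_add_one hx.ne'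
  rw [h1, Real.log_mul hx.ne' hΓx.ne'] at h
  calc Real.Gamma (x + a) = Real.exp (Real.log (Real.Gamma (x + a))) := (Real.exp_log hΓxa).symm
    _ ≤ Real.exp ((1 - a) * Real.log (Real.Gamma x) + a * (Real.log x + Real.log (Real.Gamma x))) :=
        Real.exp_le_exp.mpr h
    _ = Real.exp (Real.log (Real.Gamma x) + a * Real.log x) := by ring_nf
    _ = Real.Gamma x * x ^ a := by
        rw [Real.exp_add, Real.exp_log hΓx, Real.rpow_def_of_pos hx, mul_comm a]

lemma wendel_low {a x : ℝ} (ha0 : 0 ≤ a) (ha1 : a ≤ 1) (hx : 0 < x) :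
    x * Real.Gamma x ≤ Real.Gamma (x + a) * (x + a) ^ (1 - a) := by
  have h := Real.convexOn_log_Gamma.2 (mem_Ioi.mpr (by linarith : (0:ℝ) < x + a))
    (mem_Ioi.mpr (by linarith : (0:ℝ) < x + a + 1)) ha0 (by linarith : (0:ℝ) ≤ 1 - a) (by ring)
  have harg : a • (x + a) + (1 - a) • (x + a + 1) = x + 1 := by simp [smul_eq_mul]; ring
  rw [harg] at h
  simp only [Function.comp_apply, smul_eq_mul] at h
  have hxa : 0 < x + a := by linarith
  have hΓxa : 0 < Real.Gamma (x + a) := Real.Gamma_pos_of_pos hxa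
  have h1 : Real.Gamma (x + 1) = x * Real.Gamma x := Real.Gamma_add_one hx.ne'
  have h2 : Real.Gamma (x + a + 1) = (x + a) * Real.Gamma (x + a) := Real.Gamma_add_one hxa.ne'
  rw [h1, h2, Real.log_mul hxa.ne' hΓxa.ne'] at h
  have hΓx : 0 < Real.Gamma x := Real.Gamma_pos_of_pos hx
  calc x * Real.Gamma x = Real.exp (Real.log (x * Real.Gamma x)) :=
        (Real.exp_log (by positivity)).symm
    _ ≤ Real.exp (a * Real.log (Real.Gamma (x+a)) + (1-a) * (Real.log (x+a) + Real.log (Real.Gamma (x+a)))) :=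
        Real.exp_le_exp.mpr h
    _ = Real.exp (Real.log (Real.Gamma (x + a)) + (1 - a) * Real.log (x + a)) := by ring_nf
    _ = Real.Gamma (x + a) * (x + a) ^ (1 - a) := by
        rw [Real.exp_add, Real.exp_log hΓxa, Real.rpow_def_of_pos hxa, mul_comm (1-a)]

lemma keyAux {a : ℝ} (ha0 : 0 ≤ a) (ha1 : a ≤ 1) :
    Tendsto (fun x : ℝ => Real.Gamma (x + a) / (Real.Gamma x * x ^ a)) atTop (𝓝 1) := by
  have hlow : Tendsto (fun x : ℝ => (x / (x + a)) ^ (1 - a)) atTop (𝓝 1) := by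
    have h1 : Tendsto (fun x : ℝ => x / (x + a)) atTop (𝓝 1) := by
      have hg : Tendsto (fun x : ℝ => (x + a) / x) atTop (𝓝 1) := by
        have : Tendsto (fun x : ℝ => 1 + a * x⁻¹) atTop (𝓝 (1 + a * 0)) :=
          tendsto_const_nhds.add (tendsto_inv_atTop_zero.const_mul a)
        rw [mul_zero, add_zero] at this
        refine this.congr' ?_
        filter_upwards [eventually_gt_atTop 0] with x hx
        field_simp
      have := hg.inv₀ one_ne_zero
      rw [inv_one] at this
      refine this.congr' ?_
      filter_upwards [eventually_gt_atTop 0] with x hx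
      rw [inv_div]
    have := (h1.rpow_const (Or.inr (by linarith : (0:ℝ) ≤ 1 - a)))
    simpa using this
  refine tendsto_of_tendsto_of_tendsto_of_le_of_le' hlow tendsto_const_nhds ?_ ?_
  · filter_upwards [eventually_gt_atTop 0] with x hx
    have hxa : 0 < x + a := by linarith
    have hΓx : 0 < Real.Gamma x := Real.Gamma_pos_of_pos hx
    have hxp : (0:ℝ) < x ^ a := Real.rpow_pos_of_pos hx a
    rw [Real.div_rpow hx.le hxa.le, div_le_div_iff₀ (by positivity) (by positivity)]
    have h := wendel_low ha0 ha1 hx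
    -- x^(1-a) * (Γ x * x^a) = x * Γ x  and cross-multiply with (x+a)^(1-a)
    have hx' : x ^ (1-a) * x ^ a = x := by
      rw [← Real.rpow_add hx]; norm_num
    calc x ^ (1-a) * (Real.Gamma x * x ^ a) = x * Real.Gamma x := by
          rw [show x ^ (1-a) * (Real.Gamma x * x ^ a) = (x ^ (1-a) * x ^ a) * Real.Gamma x by ring, hx']
      _ ≤ Real.Gamma (x + a) * (x + a) ^ (1 - a) := h
  · filter_upwards [eventually_gt_atTop 0] with x hx
    have hΓx : 0 < Real.Gamma x := Real.Gamma_pos_of_pos hx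
    have hxp : (0:ℝ) < x ^ a := Real.rpow_pos_of_pos hx a
    rw [div_le_one (by positivity)]
    exact wendel_up ha0 ha1 hx

lemma keyLemma : ∀ (n : ℕ) (a : ℝ), 0 ≤ a → a ≤ n + 1 →
    Tendsto (fun x : ℝ => Real.Gamma (x + a) / (Real.Gamma x * x ^ a)) atTop (𝓝 1) := by
  intro n
  induction n with
  | zero => intro a h0 h1; exact keyAux h0 (by norm_num at h1; exact h1)
  | succ m ih =>
    intro a h0 h1
    by_cases hle : a ≤ m + 1
    · exact ih a h0 hle
    push_neg at hle
    have h0' : 0 ≤ a - 1 := by have : (0:ℝ) ≤ m := Nat.cast_nonneg m; linarith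
    have ih' := ih (a - 1) h0' (by push_cast at h1 ⊢; linarith)
    have hfact : Tendsto (fun x : ℝ => (x + (a-1)) / x) atTop (𝓝 1) := by
      have : Tendsto (fun x : ℝ => 1 + (a-1) * x⁻¹) atTop (𝓝 (1 + (a-1) * 0)) :=
        tendsto_const_nhds.add (tendsto_inv_atTop_zero.const_mul (a-1))
      rw [mul_zero, add_zero] at this
      refine this.congr' ?_
      filter_upwards [eventually_gt_atTop 0] with x hx
      field_simp
    have := ih'.mul hfact
    rw [mul_one] at this
    refine this.congr' ?_
    filter_upwards [eventually_gt_atTop 0] with x hx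
    have hxa : 0 < x + (a - 1) := by linarith
    have hΓ : Real.Gamma (x + a) = (x + (a-1)) * Real.Gamma (x + (a-1)) := by
      rw [show x + a = (x + (a-1)) + 1 by ring, Real.Gamma_add_one hxa.ne']
    have hxpow : x ^ a = x ^ (a-1) * x := by
      rw [← Real.rpow_add_one hx.ne']; ring_nf
    have hΓx : 0 < Real.Gamma x := Real.Gamma_pos_of_pos hx
    have hp : (0:ℝ) < x ^ (a-1) := Real.rpow_pos_of_pos hx _
    rw [hΓ, hxpow]
    field_simp


lemma key {a : ℝ} (ha : 0 ≤ a) :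
    Filter.Tendsto (fun x : ℝ => Real.Gamma (x + a) / (Real.Gamma x * x ^ a))
      Filter.atTop (𝓝 1) :=
  keyLemma ⌈a⌉₊ a ha (le_trans (Nat.le_ceil a) (by linarith))

end GammaRatioAux

/-- Fix `r > 0` and `β ∈ (0,1)`, and let
`a n = Γ(r n + 1) / (n! Γ(r n β + 1))`.  Then as `n → ∞`:
(i) if `r < 1/(1-β)` then `a (n+1) / a n → 0`;
(ii) if `r > 1/(1-β)` then `a (n+1) / a n → ∞`;
(iii) if `r = 1/(1-β)` (so `r > 1`) then `a (n+1) / a n → r^r / (r-1)^(r-1)`. -/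
theorem gamma_ratio_limits
    (r β : ℝ) (hr : 0 < r) (hβ0 : 0 < β) (hβ1 : β < 1) :
    (r < 1 / (1 - β) →
      Tendsto (fun n : ℕ =>
        (Real.Gamma (r * (n + 1) + 1) / ((n + 1).factorial * Real.Gamma (r * (n + 1) * β + 1)))
          / (Real.Gamma (r * n + 1) / (n.factorial * Real.Gamma (r * n * β + 1))))
        atTop (𝓝 0)) ∧
    (1 / (1 - β) < r →
      Tendsto (fun n : ℕ =>
        (Real.Gamma (r * (n + 1) + 1) / ((n + 1).factorial * Real.Gamma (r * (n + 1) * β + 1)))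
          / (Real.Gamma (r * n + 1) / (n.factorial * Real.Gamma (r * n * β + 1))))
        atTop atTop) ∧
    (r = 1 / (1 - β) →
      Tendsto (fun n : ℕ =>
        (Real.Gamma (r * (n + 1) + 1) / ((n + 1).factorial * Real.Gamma (r * (n + 1) * β + 1)))
          / (Real.Gamma (r * n + 1) / (n.factorial * Real.Gamma (r * n * β + 1))))
        atTop (𝓝 (r ^ r / (r - 1) ^ (r - 1)))) := by
  have h1β : 0 < 1 - β := by linarith
  have hrβ : 0 < r * β := mul_pos hr hβ0
  set ratio : ℕ → ℝ := fun n =>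
    (Real.Gamma (r * (n + 1) + 1) / ((n + 1).factorial * Real.Gamma (r * (n + 1) * β + 1)))
      / (Real.Gamma (r * n + 1) / (n.factorial * Real.Gamma (r * n * β + 1))) with hratio
  set f : ℝ → ℝ → ℝ := fun a x => Real.Gamma (x + a) / (Real.Gamma x * x ^ a) with hf
  set c : ℕ → ℝ := fun n =>
    (r + 1/(n:ℝ)) ^ r / ((1 + 1/(n:ℝ)) * (r * β + 1/(n:ℝ)) ^ (r * β)) with hc
  set h : ℕ → ℝ := fun n => f r (r * n + 1) / f (r * β) (r * β * n + 1) * c n with hh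
  set s : ℝ := r - r * β - 1 with hs
  set L : ℝ := r ^ r / (r * β) ^ (r * β) with hL
  have hLpos : 0 < L := by
    rw [hL]; positivity
  -- limit of h
  have htend : Tendsto h atTop (𝓝 L) := by
    have hx : Tendsto (fun n : ℕ => r * (n:ℝ) + 1) atTop atTop :=
      tendsto_atTop_add_const_right _ 1 (tendsto_natCast_atTop_atTop.const_mul_atTop hr)
    have hy : Tendsto (fun n : ℕ => r * β * (n:ℝ) + 1) atTop atTop :=
      tendsto_atTop_add_const_right _ 1 (tendsto_natCast_atTop_atTop.const_mul_atTop hrβ)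
    have h1 : Tendsto (fun n : ℕ => f r (r * n + 1)) atTop (𝓝 1) := (key hr.le).comp hx
    have h2 : Tendsto (fun n : ℕ => f (r * β) (r * β * n + 1)) atTop (𝓝 1) := (key hrβ.le).comp hy
    have hinv : Tendsto (fun n : ℕ => 1/(n:ℝ)) atTop (𝓝 0) :=
      tendsto_one_div_atTop_nhds_zero_nat
    have hcnum : Tendsto (fun n : ℕ => (r + 1/(n:ℝ)) ^ r) atTop (𝓝 (r ^ r)) := by
      have : Tendsto (fun n : ℕ => r + 1/(n:ℝ)) atTop (𝓝 (r + 0)) := tendsto_const_nhds.add hinv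
      rw [add_zero] at this
      exact this.rpow_const (Or.inl hr.ne')
    have hcden : Tendsto (fun n : ℕ => (1 + 1/(n:ℝ)) * (r * β + 1/(n:ℝ)) ^ (r * β)) atTop
        (𝓝 ((r*β) ^ (r*β))) := by
      have ha : Tendsto (fun n : ℕ => 1 + 1/(n:ℝ)) atTop (𝓝 (1 + 0)) := tendsto_const_nhds.add hinv
      rw [add_zero] at ha
      have hb : Tendsto (fun n : ℕ => r * β + 1/(n:ℝ)) atTop (𝓝 (r * β + 0)) :=
        tendsto_const_nhds.add hinv
      rw [add_zero] at hb
      have hb' : Tendsto (fun n : ℕ => (r * β + 1/(n:ℝ)) ^ (r * β)) atTop (𝓝 ((r*β) ^ (r*β))) :=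
        hb.rpow_const (Or.inl hrβ.ne')
      have := ha.mul hb'
      rwa [one_mul] at this
    have hctend : Tendsto c atTop (𝓝 L) :=
      hcnum.div hcden (by positivity)
    have := (h1.div h2 one_ne_zero).mul hctend
    rwa [div_one, one_mul] at this
  -- eventual equality
  have heq : ∀ᶠ n in atTop, ratio n = h n * (n:ℝ) ^ s := by
    filter_upwards [eventually_ge_atTop 1] with n hn
    have hN : (0:ℝ) < n := by exact_mod_cast hn
    set N : ℝ := (n:ℝ) with hNdef
    have hx : (0:ℝ) < r * N + 1 := by positivity
    have hy : (0:ℝ) < r * β * N + 1 := by positivity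
    have hΓx : 0 < Real.Gamma (r * N + 1) := Real.Gamma_pos_of_pos hx
    have hΓy : 0 < Real.Gamma (r * β * N + 1) := Real.Gamma_pos_of_pos hy
    have hΓxr : 0 < Real.Gamma ((r * N + 1) + r) := Real.Gamma_pos_of_pos (by positivity)
    have hΓyr : 0 < Real.Gamma ((r * β * N + 1) + r * β) := Real.Gamma_pos_of_pos (by positivity)
    have hxr : (0:ℝ) < (r * N + 1) ^ r := Real.rpow_pos_of_pos hx r
    have hyr : (0:ℝ) < (r * β * N + 1) ^ (r * β) := Real.rpow_pos_of_pos hy (r*β)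
    have hfac : (0:ℝ) < n.factorial := by exact_mod_cast n.factorial_pos
    -- step A : ratio n = f r x / f (r*β) y * ((r*N+1)^r / ((N+1) * (r*β*N+1)^(r*β)))
    have e1 : Real.Gamma (r * (N + 1) + 1) = Real.Gamma ((r * N + 1) + r) := by ring_nf
    have e2 : Real.Gamma (r * (N + 1) * β + 1) = Real.Gamma ((r * β * N + 1) + r * β) := by
      ring_nf
    have e3 : ((n+1).factorial : ℝ) = (N + 1) * n.factorial := by
      rw [Nat.factorial_succ]; push_cast; ring
    have stepA : ratio n = f r (r * N + 1) / f (r * β) (r * β * N + 1) *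
        ((r * N + 1) ^ r / ((N + 1) * (r * β * N + 1) ^ (r * β))) := by
      rw [hratio]
      simp only [hf]
      rw [e1, e2, e3]
      have hN1 : (0:ℝ) < N + 1 := by linarith
      simp only [← hNdef]
      field_simp
    -- step B : (r*N+1)^r / ((N+1) * (r*β*N+1)^(r*β)) = c n * N ^ s
    have stepB : (r * N + 1) ^ r / ((N + 1) * (r * β * N + 1) ^ (r * β)) = c n * N ^ s := by
      have ex : r * N + 1 = N * (r + 1/N) := by field_simp
      have ey : r * β * N + 1 = N * (r * β + 1/N) := by field_simp
      have en : N + 1 = N * (1 + 1/N) := by field_simp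
      have hrN : (0:ℝ) ≤ r + 1/N := by positivity
      have hrβN : (0:ℝ) ≤ r * β + 1/N := by positivity
      rw [ex, ey, en, Real.mul_rpow hN.le hrN, Real.mul_rpow hN.le hrβN]
      have hNs : N ^ r = N ^ s * N ^ (r * β) * N := by
        have e : N ^ s * N ^ (r * β) * N = N ^ (s + r * β + 1) := by
          rw [Real.rpow_add hN, Real.rpow_add hN, Real.rpow_one]
        rw [e, hs]
        congr 1
        ring
      rw [hNs, hc]
      have p1 : (0:ℝ) < N ^ (r*β) := Real.rpow_pos_of_pos hN _
      have p2 : (0:ℝ) < (r * β + 1/N) ^ (r*β) := Real.rpow_pos_of_pos (by positivity) _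
      have p3 : (0:ℝ) < 1 + 1/N := by positivity
      field_simp
      ring
    rw [stepA, stepB, hh]
    ring
  refine ⟨?_, ?_, ?_⟩
  · intro hcase
    rw [lt_div_iff₀ h1β] at hcase
    have hsneg : s < 0 := by rw [hs]; nlinarith
    have hpow : Tendsto (fun n : ℕ => (n:ℝ) ^ s) atTop (𝓝 0) := by
      have := (tendsto_rpow_neg_atTop (by linarith : (0:ℝ) < -s)).comp
        tendsto_natCast_atTop_atTop
      simpa [Function.comp_def, neg_neg] using this
    have hlim := htend.mul hpow
    rw [mul_zero] at hlim
    exact hlim.congr' (EventuallyEq.symm heq)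
  · intro hcase
    rw [div_lt_iff₀ h1β] at hcase
    have hspos : 0 < s := by rw [hs]; nlinarith
    have hpow : Tendsto (fun n : ℕ => (n:ℝ) ^ s) atTop atTop :=
      (tendsto_rpow_atTop hspos).comp tendsto_natCast_atTop_atTop
    exact (Tendsto.pos_mul_atTop hLpos htend hpow).congr' (EventuallyEq.symm heq)
  · intro hcase
    rw [eq_div_iff h1β.ne'] at hcase
    have hrβ1 : r * β = r - 1 := by nlinarith
    have hszero : s = 0 := by rw [hs]; linarith
    have heq' : ∀ᶠ n in atTop, h n = ratio n := by
      filter_upwards [heq] with n e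
      rw [e, hszero, Real.rpow_zero, mul_one]
    have := htend.congr' heq'
    rwa [hL, hrβ1] at this
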